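/- Let 1 ≤ κ ≤ N and K > 0. There exists a maximizer c̃ ∈ D_N(K) of c ↦ 𝒱(c;κ,L) over D_N(K) satisfying (i) c̃_i L_i ≤ c̃_j L_j for every i ∈ {1,…,κ} and every j ∈ {κ+1,…,N}, and (ii) c̃_1 L_1 ≤ c̃_2 L_2 ≤ ⋯ ≤ c̃_κ L_κ; moreover for such a maximizer V(κ,K,L) = ∑_{i=1}^{κ} c̃_i L_i. -/

import Mathlib

open Finset

/-- The inner minimum `𝒱(c; κ, L)`: the minimum over subsets `U ⊆ {1,…,N}` with `|U| = κ`
of `∑_{i ∈ U} c_i L_i`. -/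
noncomputable def Vmin (N κ : ℕ) (L c : ℕ → ℝ) : ℝ :=
  sInf {x : ℝ | ∃ U : Finset ℕ, U ⊆ Finset.Icc 1 N ∧ U.card = κ ∧ x = ∑ i ∈ U, c i * L i}

/-- Membership in the constraint set `D_N(K) = {c ∈ [0,1]^N : ∑_{i=1}^N c_i ≤ K}`. -/
def Dmem (N : ℕ) (K : ℝ) (c : ℕ → ℝ) : Prop :=
  (∀ i ∈ Finset.Icc 1 N, 0 ≤ c i ∧ c i ≤ 1) ∧ (∑ i ∈ Finset.Icc 1 N, c i) ≤ K

/-- The max–min value `V(κ, K, L) = sup_{c ∈ D_N(K)} 𝒱(c; κ, L)`. -/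
noncomputable def Vval (N κ : ℕ) (K : ℝ) (L : ℕ → ℝ) : ℝ :=
  sSup {v : ℝ | ∃ c : ℕ → ℝ, Dmem N K c ∧ v = Vmin N κ L c}

lemma pcard_nonempty {N κ : ℕ} (hκN : κ ≤ N) :
    (Finset.powersetCard κ (Finset.Icc 1 N)).Nonempty := by
  obtain ⟨t, hts, htc⟩ := Finset.exists_subset_card_eq (s := Finset.Icc 1 N) (n := κ)
    (by simpa [Nat.card_Icc] using hκN)
  exact ⟨t, Finset.mem_powersetCard.2 ⟨hts, htc⟩⟩

lemma Vmin_eq_inf' {N κ : ℕ} (hκN : κ ≤ N) (L c : ℕ → ℝ) :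
    Vmin N κ L c = (Finset.powersetCard κ (Finset.Icc 1 N)).inf' (pcard_nonempty hκN)
      (fun U => ∑ i ∈ U, c i * L i) := by
  rw [Finset.inf'_eq_csInf_image]
  unfold Vmin
  congr 1
  ext x
  simp only [Set.mem_setOf_eq, Set.mem_image, Finset.mem_coe, Finset.mem_powersetCard]
  constructor
  · rintro ⟨U, h1, h2, rfl⟩; exact ⟨U, ⟨h1, h2⟩, rfl⟩
  · rintro ⟨U, ⟨h1, h2⟩, rfl⟩; exact ⟨U, h1, h2, rfl⟩

lemma sum_Icc_one_eq {N : ℕ} (f : ℕ → ℝ) :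
    ∑ i ∈ Finset.Icc 1 N, f i = ∑ k : Fin N, f ((k : ℕ) + 1) := by
  rw [Fin.sum_univ_eq_sum_range (fun k => f (k + 1)) N]
  rw [← Finset.Ico_add_one_right_eq_Icc, Finset.sum_Ico_eq_sum_range]
  simp [Nat.add_comm]

lemma exists_sorted {N κ : ℕ} (hκN : κ ≤ N) {K : ℝ} {L : ℕ → ℝ}
    (hLpos : ∀ i ∈ Finset.Icc 1 N, 0 < L i)
    (hLmono : ∀ i j : ℕ, 1 ≤ i → i ≤ j → j ≤ N → L i ≤ L j)
    (c₀ : ℕ → ℝ) (h₀ : Dmem N K c₀) :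
    ∃ c : ℕ → ℝ, Dmem N K c ∧ Vmin N κ L c₀ ≤ Vmin N κ L c ∧
      ∀ i j : ℕ, i ∈ Finset.Icc 1 N → j ∈ Finset.Icc 1 N → i ≤ j →
        c i * L i ≤ c j * L j := by
  classical
  set a : Fin N → ℝ := fun k => c₀ ((k : ℕ) + 1) * L ((k : ℕ) + 1) with ha
  set σ : Equiv.Perm (Fin N) := Tuple.sort a with hσ
  have hb : Monotone (a ∘ σ) := Tuple.monotone_sort a
  have hmemk : ∀ k : Fin N, (k : ℕ) + 1 ∈ Finset.Icc 1 N := by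
    intro k; rw [Finset.mem_Icc]; exact ⟨by omega, k.isLt⟩
  have hLposk : ∀ k : Fin N, 0 < L ((k : ℕ) + 1) := fun k => hLpos _ (hmemk k)
  have hanonneg : ∀ k : Fin N, 0 ≤ a k := fun k =>
    mul_nonneg (h₀.1 _ (hmemk k)).1 (hLposk k).le
  have hcap : ∀ k : Fin N, a (σ k) ≤ L ((k : ℕ) + 1) := by
    intro k
    have hex : ∃ j : Fin N, k ≤ j ∧ σ j ≤ k := by
      by_contra h
      push_neg at h
      have hsub : (Finset.Ici k).image σ ⊆ Finset.Ioi k := by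
        intro m hm
        simp only [Finset.mem_image, Finset.mem_Ici] at hm
        obtain ⟨j, hj, rfl⟩ := hm
        exact Finset.mem_Ioi.2 (h j hj)
      have hcard := Finset.card_le_card hsub
      rw [Finset.card_image_of_injective _ σ.injective, Fin.card_Ici, Fin.card_Ioi] at hcard
      have := k.isLt
      omega
    obtain ⟨j, hkj, hjk⟩ := hex
    have h1 : a (σ k) ≤ a (σ j) := hb hkj
    have h2 : a (σ j) ≤ L (((σ j : Fin N) : ℕ) + 1) := by
      have hc := h₀.1 _ (hmemk (σ j))
      calc a (σ j) = c₀ _ * L _ := rfl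
        _ ≤ 1 * L (((σ j : Fin N) : ℕ) + 1) :=
          mul_le_mul_of_nonneg_right hc.2 (hLposk (σ j)).le
        _ = L (((σ j : Fin N) : ℕ) + 1) := one_mul _
    have h3 : L (((σ j : Fin N) : ℕ) + 1) ≤ L ((k : ℕ) + 1) :=
      hLmono _ _ (by omega) (by exact_mod_cast Nat.add_le_add_right hjk 1) k.isLt
    exact h1.trans (h2.trans h3)
  set c : ℕ → ℝ := fun i => if h : 1 ≤ i ∧ i ≤ N then a (σ ⟨i - 1, by omega⟩) / L i else 0
    with hcdef
  have hcL : ∀ i (h : 1 ≤ i ∧ i ≤ N), c i * L i = a (σ ⟨i - 1, by omega⟩) := by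
    intro i h
    simp only [hcdef, dif_pos h]
    exact div_mul_cancel₀ _ (hLpos i (Finset.mem_Icc.2 h)).ne'
  have hck : ∀ k : Fin N, c ((k : ℕ) + 1) = a (σ k) / L ((k : ℕ) + 1) := by
    intro k
    have h : 1 ≤ (k : ℕ) + 1 ∧ (k : ℕ) + 1 ≤ N := ⟨by omega, k.isLt⟩
    have hkk : (⟨(k : ℕ) + 1 - 1, by omega⟩ : Fin N) = k := Fin.ext (by simp)
    simp only [hcdef, dif_pos h, hkk]
  have hDc : Dmem N K c := by
    constructor
    · intro i hi
      have h : 1 ≤ i ∧ i ≤ N := Finset.mem_Icc.1 hi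
      simp only [hcdef, dif_pos h]
      have hLi := hLpos i hi
      refine ⟨div_nonneg (hanonneg _) hLi.le, ?_⟩
      rw [div_le_one hLi]
      have := hcap ⟨i - 1, by omega⟩
      simpa [Nat.sub_add_cancel h.1] using this
    · have e1 : ∑ i ∈ Finset.Icc 1 N, c i
          = ∑ k : Fin N, (a ∘ σ) k * (L ((k : ℕ) + 1))⁻¹ := by
        rw [sum_Icc_one_eq]
        exact Finset.sum_congr rfl fun k _ => by rw [hck k, div_eq_mul_inv]; rfl
      have e2 : ∑ i ∈ Finset.Icc 1 N, c₀ i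
          = ∑ k : Fin N, a k * (L ((k : ℕ) + 1))⁻¹ := by
        rw [sum_Icc_one_eq]
        refine Finset.sum_congr rfl fun k _ => ?_
        exact (mul_inv_cancel_right₀ (hLposk k).ne' _).symm
      have hanti : Antivary (a ∘ σ) (fun k : Fin N => (L ((k : ℕ) + 1))⁻¹) := by
        intro i j hij
        have hji : j ≤ i := by
          by_contra hle
          push_neg at hle
          have : L ((i : ℕ) + 1) ≤ L ((j : ℕ) + 1) :=
            hLmono _ _ (by omega) (by exact_mod_cast Nat.add_le_add_right hle.le 1) j.isLt
          have : (L ((j : ℕ) + 1))⁻¹ ≤ (L ((i : ℕ) + 1))⁻¹ :=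
            inv_anti₀ (hLposk i) this
          exact absurd hij (not_lt.2 this)
        exact hb hji
      have hre := hanti.sum_smul_le_sum_comp_perm_smul (σ := σ⁻¹)
      simp only [smul_eq_mul, Function.comp, Equiv.Perm.coe_inv, Equiv.apply_symm_apply] at hre
      calc ∑ i ∈ Finset.Icc 1 N, c i
          = ∑ k : Fin N, (a ∘ σ) k * (L ((k : ℕ) + 1))⁻¹ := e1
        _ ≤ ∑ k : Fin N, (a ∘ σ) (σ⁻¹ k) * (L ((k : ℕ) + 1))⁻¹ := by
            simpa using hre
        _ = ∑ k : Fin N, a k * (L ((k : ℕ) + 1))⁻¹ := by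
            refine Finset.sum_congr rfl fun k _ => ?_
            simp
        _ = ∑ i ∈ Finset.Icc 1 N, c₀ i := e2.symm
        _ ≤ K := h₀.2
  refine ⟨c, hDc, ?_, ?_⟩
  · rw [Vmin_eq_inf' hκN, Vmin_eq_inf' hκN]
    apply Finset.le_inf'
    intro U hU
    rw [Finset.mem_powersetCard] at hU
    obtain ⟨hUs, hUc⟩ := hU
    set e : ℕ → ℕ := fun i =>
      if h : 1 ≤ i ∧ i ≤ N then ((σ ⟨i - 1, by omega⟩ : Fin N) : ℕ) + 1 else i with he
    have hinj : ∀ i ∈ U, ∀ j ∈ U, e i = e j → i = j := by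
      intro i hi j hj hij
      have h1 : 1 ≤ i ∧ i ≤ N := Finset.mem_Icc.1 (hUs hi)
      have h2 : 1 ≤ j ∧ j ≤ N := Finset.mem_Icc.1 (hUs hj)
      simp only [he, dif_pos h1, dif_pos h2, add_left_inj] at hij
      have h3 : σ ⟨i - 1, by omega⟩ = σ ⟨j - 1, by omega⟩ := Fin.ext hij
      have h4 := σ.injective h3
      have h5 : i - 1 = j - 1 := congrArg Fin.val h4
      omega
    have himg : U.image e ∈ Finset.powersetCard κ (Finset.Icc 1 N) := by
      rw [Finset.mem_powersetCard]
      constructor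
      · intro m hm
        obtain ⟨i, hi, rfl⟩ := Finset.mem_image.1 hm
        have h : 1 ≤ i ∧ i ≤ N := Finset.mem_Icc.1 (hUs hi)
        simp only [he, dif_pos h]
        exact hmemk _
      · rw [Finset.card_image_of_injOn fun i hi j hj => hinj i hi j hj, hUc]
    refine le_trans (Finset.inf'_le _ himg) (le_of_eq ?_)
    rw [Finset.sum_image hinj]
    refine Finset.sum_congr rfl fun i hi => ?_
    have h : 1 ≤ i ∧ i ≤ N := Finset.mem_Icc.1 (hUs hi)
    rw [hcL i h]
    simp only [he, dif_pos h]
    rfl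
  · intro i j hi hj hij
    have h1 := Finset.mem_Icc.1 hi
    have h2 := Finset.mem_Icc.1 hj
    rw [hcL i h1, hcL j h2]
    exact hb (by simp only [Fin.mk_le_mk]; omega)

lemma exists_maximizer {N κ : ℕ} (hκN : κ ≤ N) {K : ℝ} (hK : 0 < K) (L : ℕ → ℝ) :
    ∃ c₀ : ℕ → ℝ, Dmem N K c₀ ∧ ∀ c', Dmem N K c' → Vmin N κ L c' ≤ Vmin N κ L c₀ := by
  classical
  set T : Set (ℕ → ℝ) :=
    (Set.univ.pi fun i => Set.Icc (0 : ℝ) (if i ∈ Finset.Icc 1 N then 1 else 0)) ∩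
      {c | ∑ i ∈ Finset.Icc 1 N, c i ≤ K} with hT
  have hTc : IsCompact T := by
    apply IsCompact.inter_right
    · exact isCompact_univ_pi fun i => isCompact_Icc
    · exact isClosed_le (by
        exact continuous_finset_sum _ fun i _ => continuous_apply i) continuous_const
  have hTne : T.Nonempty := by
    refine ⟨0, ⟨fun i _ => ?_, by simpa using hK.le⟩⟩
    simp only [Pi.zero_apply, Set.mem_Icc, le_refl, true_and]
    split_ifs <;> norm_num
  have hcont : Continuous fun c : ℕ → ℝ => Vmin N κ L c := by
    have heq : (fun c : ℕ → ℝ => Vmin N κ L c)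
        = fun c => (Finset.powersetCard κ (Finset.Icc 1 N)).inf' (pcard_nonempty hκN)
            (fun U => ∑ i ∈ U, c i * L i) := funext fun c => Vmin_eq_inf' hκN L c
    rw [heq]
    exact Continuous.finset_inf'_apply (pcard_nonempty hκN)
      fun U _ => continuous_finset_sum _ fun i _ => (continuous_apply i).mul continuous_const
  obtain ⟨c₀, hc₀T, hmax⟩ := hTc.exists_isMaxOn hTne hcont.continuousOn
  have hc₀D : Dmem N K c₀ := by
    constructor
    · intro i hi
      have h2 := hc₀T.1 i (Set.mem_univ i)
      simp only [hi, if_true, Set.mem_Icc] at h2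
      exact h2
    · exact hc₀T.2
  refine ⟨c₀, hc₀D, fun c' hc' => ?_⟩
  set c'' : ℕ → ℝ := fun i => if i ∈ Finset.Icc 1 N then c' i else 0 with hc''
  have hc''T : c'' ∈ T := by
    constructor
    · intro i _
      simp only [hc'']
      split_ifs with h
      · exact (hc'.1 i h)
      · exact ⟨le_refl 0, le_refl 0⟩
    · calc ∑ i ∈ Finset.Icc 1 N, c'' i = ∑ i ∈ Finset.Icc 1 N, c' i :=
            Finset.sum_congr rfl fun i hi => by simp only [hc'']; rw [if_pos hi]
        _ ≤ K := hc'.2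
  have hVeq : Vmin N κ L c' = Vmin N κ L c'' := by
    rw [Vmin_eq_inf' hκN, Vmin_eq_inf' hκN]
    refine Finset.inf'_congr _ rfl fun U hU => ?_
    rw [Finset.mem_powersetCard] at hU
    exact Finset.sum_congr rfl fun i hi => by simp only [hc'']; rw [if_pos (hU.1 hi)]
  rw [hVeq]
  exact hmax hc''T

/-- there is a maximizer `c̃ ∈ D_N(K)` of `c ↦ 𝒱(c;κ,L)` satisfying
(i) `c̃_i L_i ≤ c̃_j L_j` for `i ∈ {1,…,κ}`, `j ∈ {κ+1,…,N}`, and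
(ii) `c̃_1 L_1 ≤ ⋯ ≤ c̃_κ L_κ`; moreover for any such maximizer
`V(κ,K,L) = ∑_{i=1}^κ c̃_i L_i`. -/
theorem stmt_1 (N : ℕ) (hN : 1 ≤ N) (L : ℕ → ℝ)
    (hLpos : ∀ i ∈ Finset.Icc 1 N, 0 < L i)
    (hLmono : ∀ i j : ℕ, 1 ≤ i → i ≤ j → j ≤ N → L i ≤ L j)
    (κ : ℕ) (hκ1 : 1 ≤ κ) (hκN : κ ≤ N) (K : ℝ) (hK : 0 < K) :
    (∃ c : ℕ → ℝ, Dmem N K c ∧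
      (∀ c' : ℕ → ℝ, Dmem N K c' → Vmin N κ L c' ≤ Vmin N κ L c) ∧
      (∀ i ∈ Finset.Icc 1 κ, ∀ j ∈ Finset.Icc (κ + 1) N, c i * L i ≤ c j * L j) ∧
      (∀ i j : ℕ, 1 ≤ i → i ≤ j → j ≤ κ → c i * L i ≤ c j * L j)) ∧
    (∀ c : ℕ → ℝ, Dmem N K c →
      (∀ c' : ℕ → ℝ, Dmem N K c' → Vmin N κ L c' ≤ Vmin N κ L c) →
      (∀ i ∈ Finset.Icc 1 κ, ∀ j ∈ Finset.Icc (κ + 1) N, c i * L i ≤ c j * L j) →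
      (∀ i j : ℕ, 1 ≤ i → i ≤ j → j ≤ κ → c i * L i ≤ c j * L j) →
      Vval N κ K L = ∑ i ∈ Finset.Icc 1 κ, c i * L i) := by
  constructor
  · obtain ⟨c₀, hc₀D, hc₀max⟩ := exists_maximizer hκN hK L
    obtain ⟨c, hcD, hcV, hcmono⟩ := exists_sorted hκN hLpos hLmono c₀ hc₀D
    refine ⟨c, hcD, fun c' hc' => (hc₀max c' hc').trans hcV, ?_, ?_⟩
    · intro i hi j hj
      rw [Finset.mem_Icc] at hi hj
      exact hcmono i j (Finset.mem_Icc.2 ⟨hi.1, hi.2.trans hκN⟩)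
        (Finset.mem_Icc.2 ⟨by omega, hj.2⟩) (by omega)
    · intro i j h1 h2 h3
      exact hcmono i j (Finset.mem_Icc.2 ⟨h1, by omega⟩)
        (Finset.mem_Icc.2 ⟨by omega, by omega⟩) h2
  · intro c hcD hcmax hc1 hc2
    have hfnonneg : ∀ j ∈ Finset.Icc 1 N, 0 ≤ c j * L j := fun j hj =>
      mul_nonneg (hcD.1 j hj).1 (hLpos j hj).le
    have hIccκ : Finset.Icc 1 κ ∈ Finset.powersetCard κ (Finset.Icc 1 N) :=
      Finset.mem_powersetCard.2 ⟨Finset.Icc_subset_Icc_right hκN, by simp [Nat.card_Icc]⟩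
    have hVc : Vmin N κ L c = ∑ i ∈ Finset.Icc 1 κ, c i * L i := by
      rw [Vmin_eq_inf' hκN]
      apply le_antisymm (Finset.inf'_le _ hIccκ)
      apply Finset.le_inf'
      intro U hU
      rw [Finset.mem_powersetCard] at hU
      obtain ⟨hUs, hUc⟩ := hU
      classical
      set s := Finset.Icc 1 κ \ U with hs
      set t := U \ Finset.Icc 1 κ with ht
      have hcard : s.card = t.card := by
        rw [hs, ht]
        have h1 := Finset.card_sdiff_add_card_inter (Finset.Icc 1 κ) U
        have h2 := Finset.card_sdiff_add_card_inter U (Finset.Icc 1 κ)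
        rw [Finset.inter_comm] at h2
        have hκc : (Finset.Icc 1 κ).card = κ := by simp [Nat.card_Icc]
        omega
      have hkey : ∑ i ∈ s, c i * L i ≤ ∑ j ∈ t, c j * L j := by
        rcases s.eq_empty_or_nonempty with hse | hsne
        · rw [hse, Finset.sum_empty]
          exact Finset.sum_nonneg fun j hj =>
            hfnonneg j (hUs (Finset.mem_sdiff.1 hj).1)
        · have htne : t.Nonempty := by
            rw [← Finset.card_pos, ← hcard, Finset.card_pos]; exact hsne
          obtain ⟨j₀, hj₀t, hj₀min⟩ := Finset.exists_min_image t (fun j => c j * L j) htne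
          have hj₀ : j₀ ∈ Finset.Icc (κ + 1) N := by
            have h1 := Finset.mem_sdiff.1 hj₀t
            have h2 := Finset.mem_Icc.1 (hUs h1.1)
            have h3 : ¬ (1 ≤ j₀ ∧ j₀ ≤ κ) := fun h => h1.2 (Finset.mem_Icc.2 h)
            exact Finset.mem_Icc.2 ⟨by omega, h2.2⟩
          calc ∑ i ∈ s, c i * L i ≤ s.card • (c j₀ * L j₀) :=
                Finset.sum_le_card_nsmul s _ _ fun i hi =>
                  hc1 i (Finset.mem_sdiff.1 hi).1 j₀ hj₀
            _ = t.card • (c j₀ * L j₀) := by rw [hcard]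
            _ ≤ ∑ j ∈ t, c j * L j := Finset.card_nsmul_le_sum t _ _ hj₀min
      calc ∑ i ∈ Finset.Icc 1 κ, c i * L i
          = ∑ i ∈ Finset.Icc 1 κ ∩ U, c i * L i + ∑ i ∈ s, c i * L i :=
            (Finset.sum_inter_add_sum_sdiff _ _ _).symm
        _ ≤ ∑ i ∈ U ∩ Finset.Icc 1 κ, c i * L i + ∑ j ∈ t, c j * L j := by
            rw [Finset.inter_comm]
            exact add_le_add_right hkey _
        _ = ∑ i ∈ U, c i * L i := Finset.sum_inter_add_sum_sdiff _ _ _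
    rw [← hVc]
    apply IsGreatest.csSup_eq
    constructor
    · exact ⟨c, hcD, rfl⟩
    · rintro v ⟨c', hc', rfl⟩
      exact hcmax c' hc'
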